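/- (Corollary 1 of the paper.) Let ψ* be a Markov coordination strategy such that, for each t and each count vector z with ∑_a z(a) = n, ψ*_t(z) attains the minimum in the dynamic-programming recursion V_t(z) = min_γ [ℓ̂_t(z, γ) + ∑_{z'} T̂_t(z, γ)(z') V_{t+1}(z')] (with V_{T+1} ≡ 0). Define the symmetric decentralized strategy g* by g*_t(z_{1:t}, x) := ψ*_t(z_t)(x). Then g* is globally optimal among all symmetric decentralized strategies: for every symmetric strategy g (where each controller uses U_t^i = g_t(Z_{1:t}, X_t^i) with the same g_t), J(g*) ≤ J(g), and J(g*) = ∑_z P(Z_1 = z) V_1(z). -/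

import Mathlib

open scoped ENNReal

def emp {X : Type*} [DecidableEq X] {n : ℕ} (x : Fin n → X) : X → ℕ :=
  fun a => (Finset.univ.filter (fun i => x i = a)).card

def Hset {X : Type*} [Fintype X] [DecidableEq X] (n : ℕ) (m : X → ℕ) : Finset (Fin n → X) :=
  Finset.univ.filter (fun x => emp x = m)

noncomputable def iid {W : Type*} [Fintype W] (n : ℕ) (ν : PMF W) : PMF (Fin n → W) :=
  PMF.ofFintype (fun w => ∏ i, ν (w i)) (by
    have h : ∑ j : W, ν j = 1 := by rw [← ν.tsum_coe, tsum_fintype]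
    rw [← Fintype.prod_sum]; simp [h])

variable {X U W : Type*} [Fintype X] [DecidableEq X] [Nonempty X]
  [Fintype U] [Nonempty U] [Fintype W]

/-- Closed-loop law of the state trajectory `(X_0, …, X_t)` in the decentralized system with
symmetric strategy `g`: each controller applies `U_t^i = g_t(Z_{0:t}, X_t^i)`. -/
noncomputable def hist (n : ℕ) (PX : PMF X) (PW : ℕ → PMF W)
    (f : ℕ → X → U → W → (X → ℕ) → X)
    (g : (t : ℕ) → (Fin (t + 1) → (X → ℕ)) → X → U) :
    (t : ℕ) → PMF (Fin (t + 1) → (Fin n → X))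
  | 0 => (iid n PX).map (fun x _ => x)
  | t + 1 =>
    (hist n PX PW f g t).bind (fun xs =>
      (iid n (PW t)).map (fun w =>
        Fin.snoc xs (fun i =>
          f t (xs (Fin.last t) i)
            (g t (fun s => emp (xs s)) (xs (Fin.last t) i))
            (w i) (emp (xs (Fin.last t))))))

/-- The (finite) space of achievable mean fields. -/
def Mspace (X : Type*) [Fintype X] [DecidableEq X] (n : ℕ) : Finset (X → ℕ) :=
  Finset.univ.image (fun x : Fin n → X => emp x)

/-- `ℓ̂_t(m, γ)`: average cost over the uniform distribution on `H(m)`. -/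
noncomputable def lhat (n : ℕ) (ℓ : ℕ → (Fin n → X) → (Fin n → U) → ℝ)
    (t : ℕ) (m : X → ℕ) (γ : X → U) : ℝ :=
  (∑ x ∈ Hset n m, ℓ t x (fun i => γ (x i))) / ((Hset n m).card : ℝ)

/-- `T̂_t(m, γ)(m')`: the mean-field transition kernel (independent of the representative). -/
noncomputable def That (n : ℕ) (PW : ℕ → PMF W) (f : ℕ → X → U → W → (X → ℕ) → X)
    (t : ℕ) (m : X → ℕ) (γ : X → U) (m' : X → ℕ) : ℝ≥0∞ :=
  (∑ x0 ∈ Hset n m,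
    ∑ w ∈ Finset.univ.filter
      (fun w : Fin n → W => emp (fun i => f t (x0 i) (γ (x0 i)) (w i) m) = m'),
      iid n (PW t) w) / ((Hset n m).card : ℝ≥0∞)

/-- The dynamic-programming value functions `V_t`, with `V_T ≡ 0`. -/
noncomputable def V (n T : ℕ) (PW : ℕ → PMF W) (f : ℕ → X → U → W → (X → ℕ) → X)
    (ℓ : ℕ → (Fin n → X) → (Fin n → U) → ℝ) (t : ℕ) : (X → ℕ) → ℝ :=
  if t < T then fun m =>
    Finset.univ.inf' Finset.univ_nonempty (fun γ : X → U =>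
      lhat n ℓ t m γ +
        ∑ m' ∈ Mspace X n, (That n PW f t m γ m').toReal * V n T PW f ℓ (t + 1) m')
  else fun _ => 0
termination_by T - t

/-- Expected total cost `J(g)` of a symmetric decentralized strategy. -/
noncomputable def Jdec (n T : ℕ) (PX : PMF X) (PW : ℕ → PMF W)
    (f : ℕ → X → U → W → (X → ℕ) → X) (ℓ : ℕ → (Fin n → X) → (Fin n → U) → ℝ)
    (g : (t : ℕ) → (Fin (t + 1) → (X → ℕ)) → X → U) : ℝ :=
  ∑ t ∈ Finset.range T, ∑ xs : Fin (t + 1) → (Fin n → X),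
    (hist n PX PW f g t xs).toReal *
      ℓ t (xs (Fin.last t)) (fun i => g t (fun s => emp (xs s)) (xs (Fin.last t) i))


section Aux
open Finset

variable {n : ℕ}

lemma emp_comp {X : Type*} [DecidableEq X] (x : Fin n → X) (σ : Equiv.Perm (Fin n)) :
    emp (x ∘ σ) = emp x := by
  funext a
  unfold emp
  rw [← Fintype.card_subtype, ← Fintype.card_subtype]
  exact Fintype.card_congr (σ.subtypeEquiv (fun i => by simp [Function.comp]))

lemma exists_perm_of_emp_eq {X : Type*} [Fintype X] [DecidableEq X] {x x' : Fin n → X}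
    (h : emp x = emp x') : ∃ σ : Equiv.Perm (Fin n), x' = x ∘ σ := by
  have hcard : ∀ a : X, Fintype.card {i // x' i = a} = Fintype.card {i // x i = a} := by
    intro a
    have := congrFun h a
    unfold emp at this
    simpa [Fintype.card_subtype] using this.symm
  let fib : ∀ a : X, {i // x' i = a} ≃ {i // x i = a} := fun a => Fintype.equivOfCardEq (hcard a)
  let σ : Fin n ≃ Fin n :=
    (Equiv.sigmaFiberEquiv x').symm.trans ((Equiv.sigmaCongrRight fib).trans (Equiv.sigmaFiberEquiv x))
  refine ⟨σ, funext fun i => ?_⟩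
  have : x (σ i) = x' i := by
    simp only [σ, Equiv.trans_apply, Equiv.sigmaFiberEquiv, Equiv.sigmaCongrRight]
    exact (fib (x' i) ⟨i, rfl⟩).2
  simp [Function.comp, this]

lemma iid_comp {W : Type*} [Fintype W] (ν : PMF W) (w : Fin n → W) (σ : Equiv.Perm (Fin n)) :
    iid n ν (w ∘ σ) = iid n ν w := by
  simp only [iid, PMF.ofFintype_apply]
  exact Equiv.prod_comp σ (fun i => ν (w i))

end Aux

section Aux2
open Finset

variable {X U W : Type*} [Fintype X] [DecidableEq X] [Nonempty X]
  [Fintype U] [Nonempty U] [Fintype W]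

lemma pmf_map_apply_injective {α β : Type*} (p : PMF α) {e : α → β}
    (he : Function.Injective e) (a : α) : (p.map e) (e a) = p a := by
  rw [PMF.map_apply]
  rw [tsum_eq_single a (fun b hb => if_neg (fun h => hb ((he h).symm)))]
  simp

lemma snoc_comp_perm {X : Type*} {n t : ℕ} (ys : Fin (t+1) → Fin n → X) (v : Fin n → X)
    (σ : Equiv.Perm (Fin n)) :
    (Fin.snoc (fun s => ys s ∘ σ) (v ∘ σ) : Fin (t+1+1) → Fin n → X)
      = fun s => ((Fin.snoc ys v : Fin (t+1+1) → Fin n → X) s) ∘ ⇑σ := by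
  funext s
  refine Fin.lastCases ?_ (fun j => ?_) s <;> simp

lemma iid_map_perm {W : Type*} [Fintype W] {n : ℕ} (ν : PMF W) (σ : Equiv.Perm (Fin n)) :
    (iid n ν).map (fun w => w ∘ σ) = iid n ν := by
  ext w
  rw [PMF.map_apply, tsum_eq_single (w ∘ ⇑σ.symm) ?_]
  · have : w = (w ∘ ⇑σ.symm) ∘ ⇑σ := by
      funext i; simp
    rw [if_pos this, iid_comp]
  · intro b hb
    rw [if_neg]
    intro h
    exact hb (by funext i; simpa using (congrFun h (σ.symm i)).symm)

lemma pmf_map_precomp {W β : Type*} [Fintype W] {n : ℕ} (ν : PMF W) (σ : Equiv.Perm (Fin n))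
    (F : (Fin n → W) → β) :
    (iid n ν).map F = (iid n ν).map (fun w => F (w ∘ σ)) := by
  conv_lhs => rw [← iid_map_perm ν σ]
  rw [PMF.map_comp]
  rfl

lemma hist_map_perm {n : ℕ} (PX : PMF X) (PW : ℕ → PMF W)
    (f : ℕ → X → U → W → (X → ℕ) → X)
    (g : (t : ℕ) → (Fin (t + 1) → (X → ℕ)) → X → U) (σ : Equiv.Perm (Fin n)) :
    ∀ t, (hist n PX PW f g t).map (fun xs s => xs s ∘ σ) = hist n PX PW f g t := by
  intro t
  induction t with
  | zero =>
    show ((iid n PX).map (fun x _ => x)).map _ = (iid n PX).map (fun x _ => x)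
    rw [PMF.map_comp]
    exact (pmf_map_precomp PX σ (fun x (_ : Fin 1) => x)).symm
  | succ t ih =>
    show ((hist n PX PW f g t).bind _).map _ = (hist n PX PW f g t).bind _
    rw [PMF.map_bind]
    conv_rhs => rw [← ih]
    rw [PMF.bind_map]
    congr 1
    funext ys
    simp only [Function.comp]
    rw [PMF.map_comp, pmf_map_precomp (PW t) σ.symm]
    congr 1
    funext w
    simp only [Function.comp]
    rw [← snoc_comp_perm]
    have h1 : emp (ys (Fin.last t) ∘ ⇑σ) = emp (ys (Fin.last t)) := emp_comp _ σ
    have h2 : (fun s => emp (ys s ∘ ⇑σ)) = fun s => emp (ys s) := by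
      funext s; exact emp_comp (ys s) σ
    have h3 : ((fun i => f t (ys (Fin.last t) i)
          (g t (fun s => emp (ys s)) (ys (Fin.last t) i)) (w ((Equiv.symm σ) i))
          (emp (ys (Fin.last t)))) ∘ ⇑σ)
        = fun i => f t (ys (Fin.last t) (σ i))
            (g t (fun s => emp (ys s)) (ys (Fin.last t) (σ i))) (w i)
            (emp (ys (Fin.last t))) := by
      funext i; simp [Function.comp]
    simp only [Function.comp, h1, h2, h3]
  
lemma hist_perm {n : ℕ} (PX : PMF X) (PW : ℕ → PMF W)
    (f : ℕ → X → U → W → (X → ℕ) → X)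
    (g : (t : ℕ) → (Fin (t + 1) → (X → ℕ)) → X → U) (σ : Equiv.Perm (Fin n))
    (t : ℕ) (xs : Fin (t + 1) → Fin n → X) :
      hist n PX PW f g t (fun s => xs s ∘ σ) = hist n PX PW f g t xs := by
  conv_lhs => rw [← hist_map_perm PX PW f g σ t]
  exact pmf_map_apply_injective _ (fun a b hab => by
    funext s i
    simpa using congrFun (congrFun hab s) (σ.symm i)) xs

end Aux2

section Aux3
open Finset

variable {X U W : Type*} [Fintype X] [DecidableEq X] [Nonempty X]
  [Fintype U] [Nonempty U] [Fintype W]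

lemma mem_Hset_self {n : ℕ} (y : Fin n → X) : y ∈ Hset n (emp y) := by
  simp [Hset]

lemma Hset_card_pos {n : ℕ} (y : Fin n → X) : 0 < (Hset n (emp y)).card :=
  Finset.card_pos.mpr ⟨y, mem_Hset_self y⟩

lemma fiber_card_const {n : ℕ} (y : Fin n → X) {x x' : Fin n → X}
    (hx : x ∈ Hset n (emp y)) (hx' : x' ∈ Hset n (emp y)) :
    (Finset.univ.filter (fun σ : Equiv.Perm (Fin n) => y ∘ σ = x)).card
      = (Finset.univ.filter (fun σ : Equiv.Perm (Fin n) => y ∘ σ = x')).card := by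
  have hxx' : emp x = emp x' := by
    simp only [Hset, mem_filter] at hx hx'
    rw [hx.2, hx'.2]
  obtain ⟨τ, hτ⟩ := exists_perm_of_emp_eq hxx'
  refine Finset.card_bij' (fun σ _ => τ.trans σ) (fun σ _ => τ.symm.trans σ) ?_ ?_ ?_ ?_
  · intro σ hσ
    simp only [mem_filter, mem_univ, true_and] at hσ ⊢
    funext i
    have h1 := congrFun hσ (τ i)
    have h2 := congrFun hτ i
    simp only [Function.comp] at h1 h2 ⊢
    rw [Equiv.trans_apply, h1, ← h2]
  · intro σ hσ
    simp only [mem_filter, mem_univ, true_and] at hσ ⊢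
    funext i
    have h1 := congrFun hσ (τ.symm i)
    have h2 := congrFun hτ (τ.symm i)
    simp only [Function.comp] at h1 h2 ⊢
    rw [Equiv.trans_apply, h1, h2]
    simp
  · intro σ _; ext i; simp
  · intro σ _; ext i; simp

lemma perm_sum_eq {n : ℕ} (y : Fin n → X) (G : (Fin n → X) → ℝ) :
    ((Hset n (emp y)).card : ℝ) * ∑ σ : Equiv.Perm (Fin n), G (y ∘ σ)
      = (Fintype.card (Equiv.Perm (Fin n)) : ℝ) * ∑ x ∈ Hset n (emp y), G x := by
  classical
  set c : (Fin n → X) → ℕ :=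
    fun x => (Finset.univ.filter (fun σ : Equiv.Perm (Fin n) => y ∘ σ = x)).card with hc
  have hmem : ∀ σ : Equiv.Perm (Fin n), y ∘ σ ∈ Hset n (emp y) := by
    intro σ; simp [Hset, emp_comp]
  have hsum : ∑ σ : Equiv.Perm (Fin n), G (y ∘ σ)
      = ∑ x ∈ Hset n (emp y), (c x : ℝ) * G x := by
    have h : ∀ σ : Equiv.Perm (Fin n), G (y ∘ σ)
        = ∑ x ∈ Hset n (emp y), if y ∘ σ = x then G x else 0 := by
      intro σ
      rw [Finset.sum_ite_eq (Hset n (emp y)) (y ∘ σ) G, if_pos (hmem σ)]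
    rw [Finset.sum_congr rfl (fun σ _ => h σ), Finset.sum_comm]
    refine Finset.sum_congr rfl (fun x _ => ?_)
    rw [← Finset.sum_filter, Finset.sum_const, nsmul_eq_mul]
  have htotalN : ∑ x ∈ Hset n (emp y), c x = Fintype.card (Equiv.Perm (Fin n)) := by
    rw [← Finset.card_univ]
    exact (Finset.card_eq_sum_card_fiberwise (fun σ _ => hmem σ)).symm
  have hkey : ∀ x ∈ Hset n (emp y),
      (Hset n (emp y)).card * c x = Fintype.card (Equiv.Perm (Fin n)) := by
    intro x hx
    rw [← htotalN, Finset.sum_congr rfl (fun x' hx' => fiber_card_const y hx' hx),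
      Finset.sum_const, smul_eq_mul]
  rw [hsum, Finset.mul_sum, Finset.mul_sum]
  refine Finset.sum_congr rfl (fun x hx => ?_)
  rw [← mul_assoc, ← Nat.cast_mul, hkey x hx]

end Aux3

section Aux4
open Finset

variable {X U W : Type*} [Fintype X] [DecidableEq X] [Nonempty X]
  [Fintype U] [Nonempty U] [Fintype W]

lemma unif {n : ℕ} (PX : PMF X) (PW : ℕ → PMF W)
    (f : ℕ → X → U → W → (X → ℕ) → X)
    (g : (t : ℕ) → (Fin (t + 1) → (X → ℕ)) → X → U) (t : ℕ)
    (F : (Fin (t + 1) → (X → ℕ)) → (Fin n → X) → ℝ) :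
    ∑ xs : Fin (t + 1) → Fin n → X,
        (hist n PX PW f g t xs).toReal * F (fun s => emp (xs s)) (xs (Fin.last t))
      = ∑ xs : Fin (t + 1) → Fin n → X,
          (hist n PX PW f g t xs).toReal *
            ((∑ x ∈ Hset n (emp (xs (Fin.last t))), F (fun s => emp (xs s)) x) /
              ((Hset n (emp (xs (Fin.last t)))).card : ℝ)) := by
  classical
  set ρ : (Fin (t + 1) → Fin n → X) → ℝ := fun xs => (hist n PX PW f g t xs).toReal with hρ
  have hN : ((Fintype.card (Equiv.Perm (Fin n)) : ℝ)) ≠ 0 :=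
    Nat.cast_ne_zero.mpr Fintype.card_ne_zero
  apply mul_left_cancel₀ hN
  rw [Finset.mul_sum, Finset.mul_sum]
  have step1 : ∀ xs : Fin (t + 1) → Fin n → X,
      (Fintype.card (Equiv.Perm (Fin n)) : ℝ) * (ρ xs * F (fun s => emp (xs s)) (xs (Fin.last t)))
        = ∑ σ : Equiv.Perm (Fin n), ρ xs * F (fun s => emp (xs s)) (xs (Fin.last t)) := by
    intro xs
    rw [Finset.sum_const, Finset.card_univ, nsmul_eq_mul]
  calc ∑ xs : Fin (t + 1) → Fin n → X, (Fintype.card (Equiv.Perm (Fin n)) : ℝ) *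
          (ρ xs * F (fun s => emp (xs s)) (xs (Fin.last t)))
      = ∑ xs : Fin (t + 1) → Fin n → X, ∑ σ : Equiv.Perm (Fin n),
          ρ xs * F (fun s => emp (xs s)) (xs (Fin.last t)) :=
        Finset.sum_congr rfl (fun xs _ => step1 xs)
    _ = ∑ σ : Equiv.Perm (Fin n), ∑ xs : Fin (t + 1) → Fin n → X,
          ρ xs * F (fun s => emp (xs s)) (xs (Fin.last t)) := Finset.sum_comm
    _ = ∑ σ : Equiv.Perm (Fin n), ∑ xs : Fin (t + 1) → Fin n → X,
          ρ xs * F (fun s => emp (xs s)) (xs (Fin.last t) ∘ σ) := by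
        refine Finset.sum_congr rfl (fun σ _ => ?_)
        refine Fintype.sum_equiv
          (Equiv.piCongrRight (fun _ : Fin (t + 1) => Equiv.arrowCongr σ (Equiv.refl X)))
          _ _ (fun xs => ?_)
        have he : (Equiv.piCongrRight (fun _ : Fin (t + 1) => Equiv.arrowCongr σ (Equiv.refl X))) xs
            = fun s => xs s ∘ ⇑σ.symm := rfl
        rw [he]
        have h1 : ρ (fun s => xs s ∘ ⇑σ.symm) = ρ xs := by
          rw [hρ]; simp only []; rw [hist_perm]
        have h2 : (fun s => emp (xs s ∘ ⇑σ.symm)) = fun s => emp (xs s) := by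
          funext s; exact emp_comp (xs s) σ.symm
        have h3 : (xs (Fin.last t) ∘ ⇑σ.symm) ∘ ⇑σ = xs (Fin.last t) := by
          funext i; simp
        rw [h1, h2, h3]
    _ = ∑ xs : Fin (t + 1) → Fin n → X,
          ρ xs * ∑ σ : Equiv.Perm (Fin n), F (fun s => emp (xs s)) (xs (Fin.last t) ∘ σ) := by
        rw [Finset.sum_comm]
        exact Finset.sum_congr rfl (fun xs _ => (Finset.mul_sum _ _ _).symm)
    _ = ∑ xs : Fin (t + 1) → Fin n → X, (Fintype.card (Equiv.Perm (Fin n)) : ℝ) *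
          (ρ xs * ((∑ x ∈ Hset n (emp (xs (Fin.last t))), F (fun s => emp (xs s)) x) /
            ((Hset n (emp (xs (Fin.last t)))).card : ℝ))) := by
        refine Finset.sum_congr rfl (fun xs _ => ?_)
        have hcard : ((Hset n (emp (xs (Fin.last t)))).card : ℝ) ≠ 0 :=
          Nat.cast_ne_zero.mpr (Hset_card_pos (xs (Fin.last t))).ne'
        have hps := perm_sum_eq (xs (Fin.last t)) (F (fun s => emp (xs s)))
        have : ∑ σ : Equiv.Perm (Fin n), F (fun s => emp (xs s)) (xs (Fin.last t) ∘ σ)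
            = (Fintype.card (Equiv.Perm (Fin n)) : ℝ) *
              (∑ x ∈ Hset n (emp (xs (Fin.last t))), F (fun s => emp (xs s)) x) /
                ((Hset n (emp (xs (Fin.last t)))).card : ℝ) := by
          field_simp
          linarith [hps]
        rw [this]
        field_simp
  
end Aux4

section Aux5
open Finset

variable {X U W : Type*} [Fintype X] [DecidableEq X] [Nonempty X]
  [Fintype U] [Nonempty U] [Fintype W]

lemma mem_Mspace {n : ℕ} (x : Fin n → X) : emp x ∈ Mspace X n :=
  Finset.mem_image_of_mem _ (Finset.mem_univ x)

lemma Tterm_rep {n : ℕ} (PW : ℕ → PMF W) (f : ℕ → X → U → W → (X → ℕ) → X) (t : ℕ)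
    (γ : X → U) {y x0 : Fin n → X} (h : emp x0 = emp y) (m' : X → ℕ) :
    ∑ w ∈ Finset.univ.filter
        (fun w : Fin n → W => emp (fun i => f t (x0 i) (γ (x0 i)) (w i) (emp y)) = m'),
        iid n (PW t) w
      = ∑ w ∈ Finset.univ.filter
          (fun w : Fin n → W => emp (fun i => f t (y i) (γ (y i)) (w i) (emp y)) = m'),
          iid n (PW t) w := by
  obtain ⟨τ, hτ⟩ := exists_perm_of_emp_eq h.symm
  subst hτ
  rw [Finset.sum_filter, Finset.sum_filter]
  refine Fintype.sum_equiv (Equiv.arrowCongr τ (Equiv.refl W)) _ _ (fun w => ?_)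
  have he : (Equiv.arrowCongr τ (Equiv.refl W)) w = w ∘ ⇑τ.symm := rfl
  rw [he, iid_comp _ _ τ.symm]
  congr 1
  simp only [eq_iff_iff]
  have hcomp : (fun i => f t ((y ∘ ⇑τ) i) (γ ((y ∘ ⇑τ) i)) (w i) (emp y))
      = (fun i => f t (y i) (γ (y i)) ((w ∘ ⇑τ.symm) i) (emp y)) ∘ ⇑τ := by
    funext i; simp [Function.comp]
  rw [hcomp, emp_comp]

lemma That_eq {n : ℕ} (PW : ℕ → PMF W) (f : ℕ → X → U → W → (X → ℕ) → X) (t : ℕ)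
    (γ : X → U) (y : Fin n → X) (m' : X → ℕ) :
    That n PW f t (emp y) γ m'
      = ∑ w ∈ Finset.univ.filter
          (fun w : Fin n → W => emp (fun i => f t (y i) (γ (y i)) (w i) (emp y)) = m'),
          iid n (PW t) w := by
  unfold That
  have hc0 : ((Hset n (emp y)).card : ℝ≥0∞) ≠ 0 := by
    simpa using (Hset_card_pos y).ne'
  have hct : ((Hset n (emp y)).card : ℝ≥0∞) ≠ ∞ := ENNReal.natCast_ne_top _
  symm
  rw [ENNReal.eq_div_iff hc0 hct]
  have : ∀ x0 ∈ Hset n (emp y),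
      ∑ w ∈ Finset.univ.filter
        (fun w : Fin n → W => emp (fun i => f t (x0 i) (γ (x0 i)) (w i) (emp y)) = m'),
        iid n (PW t) w
      = ∑ w ∈ Finset.univ.filter
          (fun w : Fin n → W => emp (fun i => f t (y i) (γ (y i)) (w i) (emp y)) = m'),
          iid n (PW t) w := by
    intro x0 hx0
    have : emp x0 = emp y := (Finset.mem_filter.mp hx0).2
    exact Tterm_rep PW f t γ this m'
  rw [Finset.sum_congr rfl this, Finset.sum_const, nsmul_eq_mul]

lemma wstep {n : ℕ} (PW : ℕ → PMF W) (f : ℕ → X → U → W → (X → ℕ) → X) (t : ℕ)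
    (γ : X → U) (y : Fin n → X) (G' : (X → ℕ) → ℝ) :
    ∑ w : Fin n → W, (iid n (PW t) w).toReal *
        G' (emp (fun i => f t (y i) (γ (y i)) (w i) (emp y)))
      = ∑ m' ∈ Mspace X n, (That n PW f t (emp y) γ m').toReal * G' m' := by
  classical
  rw [← Finset.sum_fiberwise_of_maps_to
    (fun (w : Fin n → W) _ => mem_Mspace (fun i => f t (y i) (γ (y i)) (w i) (emp y)))
    (fun w => (iid n (PW t) w).toReal *
        G' (emp (fun i => f t (y i) (γ (y i)) (w i) (emp y))))]
  refine Finset.sum_congr rfl (fun m' _ => ?_)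
  rw [That_eq, ENNReal.toReal_sum (fun w _ => PMF.apply_ne_top _ _), Finset.sum_mul]
  refine Finset.sum_congr rfl (fun w hw => ?_)
  rw [(Finset.mem_filter.mp hw).2]

lemma emp_snoc {n t : ℕ} (ys : Fin (t + 1) → Fin n → X) (v : Fin n → X) :
    (fun s => emp ((Fin.snoc ys v : Fin (t + 1 + 1) → Fin n → X) s))
      = Fin.snoc (fun s => emp (ys s)) (emp v) := by
  funext s
  refine Fin.lastCases ?_ (fun j => ?_) s <;> simp

lemma trans_step {n : ℕ} (PX : PMF X) (PW : ℕ → PMF W)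
    (f : ℕ → X → U → W → (X → ℕ) → X)
    (g : (t : ℕ) → (Fin (t + 1) → (X → ℕ)) → X → U) (t : ℕ)
    (G : (Fin (t + 2) → (X → ℕ)) → ℝ) :
    ∑ xs : Fin (t + 2) → Fin n → X,
        (hist n PX PW f g (t + 1) xs).toReal * G (fun s => emp (xs s))
      = ∑ ys : Fin (t + 1) → Fin n → X, (hist n PX PW f g t ys).toReal *
          ∑ m' ∈ Mspace X n,
            (That n PW f t (emp (ys (Fin.last t))) (g t (fun s => emp (ys s))) m').toReal *
              G (Fin.snoc (fun s => emp (ys s)) m') := by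
  classical
  set nxt : (Fin (t + 1) → Fin n → X) → (Fin n → W) → (Fin n → X) := fun ys w =>
    fun i => f t (ys (Fin.last t) i)
      (g t (fun s => emp (ys s)) (ys (Fin.last t) i)) (w i) (emp (ys (Fin.last t))) with hnxt
  have hval : ∀ xs : Fin (t + 2) → Fin n → X,
      (hist n PX PW f g (t + 1) xs).toReal
        = ∑ ys : Fin (t + 1) → Fin n → X, ∑ w : Fin n → W,
            (if xs = Fin.snoc ys (nxt ys w) then
              ((hist n PX PW f g t ys) * (iid n (PW t) w)).toReal else 0) := by
    intro xs
    show ((hist n PX PW f g t).bind _ xs).toReal = _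
    rw [PMF.bind_apply, tsum_fintype,
      ENNReal.toReal_sum (fun ys _ => ENNReal.mul_ne_top (PMF.apply_ne_top _ _)
        (PMF.apply_ne_top _ _))]
    refine Finset.sum_congr rfl (fun ys _ => ?_)
    rw [PMF.map_apply, tsum_fintype, Finset.mul_sum,
      ENNReal.toReal_sum (fun w _ => by
        split_ifs
        · exact ENNReal.mul_ne_top (PMF.apply_ne_top _ _) (PMF.apply_ne_top _ _)
        · simp)]
    refine Finset.sum_congr rfl (fun w _ => ?_)
    split_ifs with h
    · rfl
    · simp
  calc ∑ xs : Fin (t + 2) → Fin n → X,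
        (hist n PX PW f g (t + 1) xs).toReal * G (fun s => emp (xs s))
      = ∑ xs : Fin (t + 2) → Fin n → X, ∑ ys : Fin (t + 1) → Fin n → X, ∑ w : Fin n → W,
          (if xs = Fin.snoc ys (nxt ys w) then
            ((hist n PX PW f g t ys) * (iid n (PW t) w)).toReal * G (fun s => emp (xs s))
          else 0) := by
        refine Finset.sum_congr rfl (fun xs _ => ?_)
        rw [hval xs, Finset.sum_mul]
        refine Finset.sum_congr rfl (fun ys _ => ?_)
        rw [Finset.sum_mul]
        refine Finset.sum_congr rfl (fun w _ => ?_)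
        split_ifs <;> simp
    _ = ∑ ys : Fin (t + 1) → Fin n → X, ∑ w : Fin n → W,
          ((hist n PX PW f g t ys) * (iid n (PW t) w)).toReal *
            G (fun s => emp ((Fin.snoc ys (nxt ys w) : Fin (t + 1 + 1) → Fin n → X) s)) := by
        rw [Finset.sum_comm]
        refine Finset.sum_congr rfl (fun ys _ => ?_)
        rw [Finset.sum_comm]
        refine Finset.sum_congr rfl (fun w _ => ?_)
        rw [Finset.sum_ite_eq' Finset.univ (Fin.snoc ys (nxt ys w))
          (fun xs => ((hist n PX PW f g t ys) * (iid n (PW t) w)).toReal *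
            G (fun s => emp (xs s)))]
        simp
    _ = ∑ ys : Fin (t + 1) → Fin n → X, (hist n PX PW f g t ys).toReal *
          ∑ m' ∈ Mspace X n,
            (That n PW f t (emp (ys (Fin.last t))) (g t (fun s => emp (ys s))) m').toReal *
              G (Fin.snoc (fun s => emp (ys s)) m') := by
        refine Finset.sum_congr rfl (fun ys _ => ?_)
        rw [← wstep PW f t (g t (fun s => emp (ys s))) (ys (Fin.last t))
          (fun m' => G (Fin.snoc (fun s => emp (ys s)) m')), Finset.mul_sum]
        refine Finset.sum_congr rfl (fun w _ => ?_)
        rw [emp_snoc, ENNReal.toReal_mul, mul_assoc]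

end Aux5

section Aux6
open Finset

variable {X U W : Type*} [Fintype X] [DecidableEq X] [Nonempty X]
  [Fintype U] [Nonempty U] [Fintype W]

/-- Value of a fixed symmetric strategy `g` on mean-field histories. -/
noncomputable def Vg (n T : ℕ) (PW : ℕ → PMF W) (f : ℕ → X → U → W → (X → ℕ) → X)
    (ℓ : ℕ → (Fin n → X) → (Fin n → U) → ℝ)
    (g : (t : ℕ) → (Fin (t + 1) → (X → ℕ)) → X → U) (t : ℕ) :
    (Fin (t + 1) → (X → ℕ)) → ℝ :=
  if t < T then fun zh =>
    lhat n ℓ t (zh (Fin.last t)) (g t zh) +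
      ∑ m' ∈ Mspace X n, (That n PW f t (zh (Fin.last t)) (g t zh) m').toReal *
        Vg n T PW f ℓ g (t + 1) (Fin.snoc zh m')
  else fun _ => 0
termination_by T - t

lemma Vg_of_lt {n T : ℕ} {PW : ℕ → PMF W} {f : ℕ → X → U → W → (X → ℕ) → X}
    {ℓ : ℕ → (Fin n → X) → (Fin n → U) → ℝ}
    {g : (t : ℕ) → (Fin (t + 1) → (X → ℕ)) → X → U} {t : ℕ} (h : t < T)
    (zh : Fin (t + 1) → (X → ℕ)) :
    Vg n T PW f ℓ g t zh = lhat n ℓ t (zh (Fin.last t)) (g t zh) +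
      ∑ m' ∈ Mspace X n, (That n PW f t (zh (Fin.last t)) (g t zh) m').toReal *
        Vg n T PW f ℓ g (t + 1) (Fin.snoc zh m') := by
  rw [Vg, if_pos h]

lemma Vg_of_ge {n T : ℕ} {PW : ℕ → PMF W} {f : ℕ → X → U → W → (X → ℕ) → X}
    {ℓ : ℕ → (Fin n → X) → (Fin n → U) → ℝ}
    {g : (t : ℕ) → (Fin (t + 1) → (X → ℕ)) → X → U} {t : ℕ} (h : ¬ t < T)
    (zh : Fin (t + 1) → (X → ℕ)) : Vg n T PW f ℓ g t zh = 0 := by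
  rw [Vg, if_neg h]

lemma V_of_lt {n T : ℕ} {PW : ℕ → PMF W} {f : ℕ → X → U → W → (X → ℕ) → X}
    {ℓ : ℕ → (Fin n → X) → (Fin n → U) → ℝ} {t : ℕ} (h : t < T) (m : X → ℕ) :
    V n T PW f ℓ t m = Finset.univ.inf' Finset.univ_nonempty (fun γ : X → U =>
      lhat n ℓ t m γ +
        ∑ m' ∈ Mspace X n, (That n PW f t m γ m').toReal * V n T PW f ℓ (t + 1) m') := by
  rw [V, if_pos h]

lemma V_of_ge {n T : ℕ} {PW : ℕ → PMF W} {f : ℕ → X → U → W → (X → ℕ) → X}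
    {ℓ : ℕ → (Fin n → X) → (Fin n → U) → ℝ} {t : ℕ} (h : ¬ t < T) (m : X → ℕ) :
    V n T PW f ℓ t m = 0 := by
  rw [V, if_neg h]

lemma cost_decomp {n T : ℕ} (PX : PMF X) (PW : ℕ → PMF W)
    (f : ℕ → X → U → W → (X → ℕ) → X) (ℓ : ℕ → (Fin n → X) → (Fin n → U) → ℝ)
    (g : (t : ℕ) → (Fin (t + 1) → (X → ℕ)) → X → U) :
    ∀ k t, T - t ≤ k →
      ∑ s ∈ Finset.Ico t T, ∑ xs : Fin (s + 1) → (Fin n → X),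
          (hist n PX PW f g s xs).toReal *
            ℓ s (xs (Fin.last s)) (fun i => g s (fun r => emp (xs r)) (xs (Fin.last s) i))
        = ∑ xs : Fin (t + 1) → (Fin n → X),
            (hist n PX PW f g t xs).toReal * Vg n T PW f ℓ g t (fun s => emp (xs s)) := by
  intro k
  induction k with
  | zero =>
    intro t ht
    have hT : ¬ t < T := by omega
    rw [Finset.Ico_eq_empty (by omega)]
    simp [Vg_of_ge hT]
  | succ k ih =>
    intro t ht
    by_cases h : t < T
    · rw [Finset.sum_eq_sum_Ico_succ_bot h]
      rw [ih (t + 1) (by omega)]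
      rw [trans_step PX PW f g t (Vg n T PW f ℓ g (t + 1))]
      rw [unif PX PW f g t (fun zh x => ℓ t x (fun i => g t zh (x i)))]
      rw [← Finset.sum_add_distrib]
      refine Finset.sum_congr rfl (fun xs _ => ?_)
      rw [Vg_of_lt h, mul_add]
      congr 1
    · rw [Finset.Ico_eq_empty (by omega)]
      simp [Vg_of_ge h]

lemma V_le_Vg {n T : ℕ} (PW : ℕ → PMF W) (f : ℕ → X → U → W → (X → ℕ) → X)
    (ℓ : ℕ → (Fin n → X) → (Fin n → U) → ℝ)
    (g : (t : ℕ) → (Fin (t + 1) → (X → ℕ)) → X → U) :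
    ∀ k t, T - t ≤ k → ∀ zh : Fin (t + 1) → (X → ℕ),
      V n T PW f ℓ t (zh (Fin.last t)) ≤ Vg n T PW f ℓ g t zh := by
  intro k
  induction k with
  | zero =>
    intro t ht zh
    have hT : ¬ t < T := by omega
    rw [V_of_ge hT, Vg_of_ge hT]
  | succ k ih =>
    intro t ht zh
    by_cases h : t < T
    · rw [V_of_lt h, Vg_of_lt h]
      refine le_trans (Finset.inf'_le _ (Finset.mem_univ (g t zh))) ?_
      refine add_le_add le_rfl (Finset.sum_le_sum (fun m' _ => ?_))
      refine mul_le_mul_of_nonneg_left ?_ ENNReal.toReal_nonneg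
      have := ih (t + 1) (by omega) (Fin.snoc zh m')
      rwa [Fin.snoc_last] at this
    · rw [V_of_ge h, Vg_of_ge h]

lemma Vg_star_eq {n T : ℕ} (PW : ℕ → PMF W) (f : ℕ → X → U → W → (X → ℕ) → X)
    (ℓ : ℕ → (Fin n → X) → (Fin n → U) → ℝ) (ψstar : ℕ → (X → ℕ) → X → U)
    (hmin : ∀ t < T, ∀ z ∈ Mspace X n,
      V n T PW f ℓ t z = lhat n ℓ t z (ψstar t z) +
        ∑ z' ∈ Mspace X n,
          (That n PW f t z (ψstar t z) z').toReal * V n T PW f ℓ (t + 1) z') :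
    ∀ k t, T - t ≤ k → ∀ zh : Fin (t + 1) → (X → ℕ), zh (Fin.last t) ∈ Mspace X n →
      Vg n T PW f ℓ (fun t zs => ψstar t (zs (Fin.last t))) t zh
        = V n T PW f ℓ t (zh (Fin.last t)) := by
  intro k
  induction k with
  | zero =>
    intro t ht zh _
    have hT : ¬ t < T := by omega
    rw [V_of_ge hT, Vg_of_ge hT]
  | succ k ih =>
    intro t ht zh hz
    by_cases h : t < T
    · rw [Vg_of_lt h, hmin t h _ hz]
      congr 1
      refine Finset.sum_congr rfl (fun m' hm' => ?_)
      congr 1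
      have := ih (t + 1) (by omega) (Fin.snoc zh m') (by rwa [Fin.snoc_last])
      rwa [Fin.snoc_last] at this
    · rw [V_of_ge h, Vg_of_ge h]

lemma init_decomp {n : ℕ} (PX : PMF X) (PW : ℕ → PMF W)
    (f : ℕ → X → U → W → (X → ℕ) → X)
    (g : (t : ℕ) → (Fin (t + 1) → (X → ℕ)) → X → U)
    (Q : (Fin 1 → (X → ℕ)) → ℝ) :
    ∑ xs : Fin 1 → (Fin n → X), (hist n PX PW f g 0 xs).toReal * Q (fun s => emp (xs s))
      = ∑ z ∈ Mspace X n, (∑ x ∈ Hset n z, iid n PX x).toReal * Q (fun _ => z) := by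
  classical
  have hval : ∀ xs : Fin 1 → (Fin n → X),
      (hist n PX PW f g 0 xs).toReal
        = ∑ x : Fin n → X, (if xs = fun _ => x then (iid n PX x).toReal else 0) := by
    intro xs
    show (((iid n PX).map (fun x _ => x)) xs).toReal = _
    rw [PMF.map_apply, tsum_fintype, ENNReal.toReal_sum (fun x _ => by
      split_ifs
      · exact PMF.apply_ne_top _ _
      · simp)]
    refine Finset.sum_congr rfl (fun x _ => ?_)
    split_ifs <;> simp
  calc ∑ xs : Fin 1 → (Fin n → X), (hist n PX PW f g 0 xs).toReal * Q (fun s => emp (xs s))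
      = ∑ xs : Fin 1 → (Fin n → X), ∑ x : Fin n → X,
          (if xs = fun _ => x then (iid n PX x).toReal * Q (fun s => emp (xs s)) else 0) := by
        refine Finset.sum_congr rfl (fun xs _ => ?_)
        rw [hval xs, Finset.sum_mul]
        refine Finset.sum_congr rfl (fun x _ => ?_)
        split_ifs <;> simp
    _ = ∑ x : Fin n → X, (iid n PX x).toReal * Q (fun _ => emp x) := by
        rw [Finset.sum_comm]
        refine Finset.sum_congr rfl (fun x _ => ?_)
        rw [Finset.sum_ite_eq' Finset.univ (fun _ => x)
          (fun xs => (iid n PX x).toReal * Q (fun s => emp (xs s)))]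
        simp
    _ = ∑ z ∈ Mspace X n, (∑ x ∈ Hset n z, iid n PX x).toReal * Q (fun _ => z) := by
        rw [← Finset.sum_fiberwise_of_maps_to (fun (x : Fin n → X) _ => mem_Mspace x)
          (fun x => (iid n PX x).toReal * Q (fun _ => emp x))]
        refine Finset.sum_congr rfl (fun z _ => ?_)
        rw [show Hset n z = Finset.univ.filter (fun x : Fin n → X => emp x = z) from rfl]
        rw [ENNReal.toReal_sum (fun x _ => PMF.apply_ne_top _ _), Finset.sum_mul]
        refine Finset.sum_congr rfl (fun x hx => ?_)
        rw [(Finset.mem_filter.mp hx).2]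

end Aux6

/-- Corollary 1: the symmetric decentralized strategy `g*_t(z_{0:t}, x) := ψ*_t(z_t)(x)`
obtained from any minimizer `ψ*` of the dynamic program is globally optimal among all
symmetric decentralized strategies, and its cost is `∑_z P(Z_1 = z) V_1(z)`. -/
theorem stmt9 (n T : ℕ) (hn : 1 ≤ n) (PX : PMF X) (PW : ℕ → PMF W)
    (f : ℕ → X → U → W → (X → ℕ) → X) (ℓ : ℕ → (Fin n → X) → (Fin n → U) → ℝ)
    (ψstar : ℕ → (X → ℕ) → X → U)
    (hmin : ∀ t < T, ∀ z ∈ Mspace X n,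
      V n T PW f ℓ t z = lhat n ℓ t z (ψstar t z) +
        ∑ z' ∈ Mspace X n,
          (That n PW f t z (ψstar t z) z').toReal * V n T PW f ℓ (t + 1) z') :
    (∀ g : (t : ℕ) → (Fin (t + 1) → (X → ℕ)) → X → U,
      Jdec n T PX PW f ℓ (fun t zs => ψstar t (zs (Fin.last t))) ≤ Jdec n T PX PW f ℓ g) ∧
    Jdec n T PX PW f ℓ (fun t zs => ψstar t (zs (Fin.last t)))
      = ∑ z ∈ Mspace X n, (∑ x ∈ Hset n z, iid n PX x).toReal * V n T PW f ℓ 0 z := by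
  have hJ : ∀ g : (t : ℕ) → (Fin (t + 1) → (X → ℕ)) → X → U,
      Jdec n T PX PW f ℓ g
        = ∑ z ∈ Mspace X n, (∑ x ∈ Hset n z, iid n PX x).toReal *
            Vg n T PW f ℓ g 0 (fun _ => z) := by
    intro g
    rw [Jdec, Finset.range_eq_Ico, cost_decomp PX PW f ℓ g T 0 (by omega)]
    exact init_decomp PX PW f g (Vg n T PW f ℓ g 0)
  have heq : Jdec n T PX PW f ℓ (fun t zs => ψstar t (zs (Fin.last t)))
      = ∑ z ∈ Mspace X n, (∑ x ∈ Hset n z, iid n PX x).toReal * V n T PW f ℓ 0 z := by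
    rw [hJ]
    refine Finset.sum_congr rfl (fun z hz => ?_)
    congr 1
    exact Vg_star_eq PW f ℓ ψstar hmin T 0 (by omega) (fun _ => z) hz
  refine ⟨fun g => ?_, heq⟩
  rw [heq, hJ g]
  refine Finset.sum_le_sum (fun z hz => ?_)
  exact mul_le_mul_of_nonneg_left (V_le_Vg PW f ℓ g T 0 (by omega) (fun _ => z))
    ENNReal.toReal_nonneg
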